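/- Let T be a leafless rooted directed tree. The following are equivalent: (i) T is locally finite and the set V_≺ of branching vertices is finite; (ii) T is locally finite and the branching index k_T is finite; (iii) for any bounded weighted shift S_λ on T with positive weights, the kernel of S_λ* is finite-dimensional. -/

import Mathlib

open scoped InnerProductSpace ENNReal

/-- A directed graph on a vertex set `V`: a set of edges with no loops. -/
structure DirectedGraph (V : Type*) where
  E : Set (V × V)
  not_loop : ∀ v : V, (v, v) ∉ E

namespace DirectedGraph

variable {V : Type*} (G : DirectedGraph V)

/-- undirected adjacency -/
def Adj (u v : V) : Prop := (u, v) ∈ G.E ∨ (v, u) ∈ G.E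

/-- `G` has a circuit: a finite sequence of `n ≥ 2` distinct vertices, consecutively
joined by edges, with an edge from the last back to the first. -/
def HasCircuit : Prop :=
  ∃ (n : ℕ) (f : ℕ → V), 2 ≤ n ∧
    (∀ i j, i < n → j < n → f i = f j → i = j) ∧
    (∀ i, i + 1 < n → (f i, f (i + 1)) ∈ G.E) ∧ (f (n - 1), f 0) ∈ G.E

/-- `G` is connected: any two distinct vertices are joined by a finite undirected path. -/
def Connected : Prop :=
  ∀ u v : V, u ≠ v → ∃ (n : ℕ) (f : ℕ → V), 2 ≤ n ∧ f 0 = u ∧ f (n - 1) = v ∧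
    ∀ i, i + 1 < n → G.Adj (f i) (f (i + 1))

/-- `v` is a root: no edge ends at `v`. -/
def IsRoot (v : V) : Prop := ∀ u : V, (u, v) ∉ G.E

/-- `G` is a directed tree: it has no circuits, is connected, and every non-root
vertex has a unique parent. -/
def IsDirectedTree : Prop :=
  ¬ G.HasCircuit ∧ G.Connected ∧ ∀ v : V, ¬ G.IsRoot v → ∃! u : V, (u, v) ∈ G.E

/-- the set of children of a vertex -/
def chi (u : V) : Set V := {v | (u, v) ∈ G.E}

/-- the children of a set of vertices -/
def chiSet (W : Set V) : Set V := {v | ∃ u ∈ W, (u, v) ∈ G.E}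

/-- the `n`-th generation of descendants of a set of vertices -/
def chiIter (n : ℕ) (W : Set V) : Set V := (G.chiSet)^[n] W

/-- the set of branching vertices: vertices with at least two children -/
def Vprec : Set V := {u | ∃ a b : V, a ∈ G.chi u ∧ b ∈ G.chi u ∧ a ≠ b}

/-- `G` is leafless: every vertex has at least one child. -/
def Leafless : Prop := ∀ u : V, (G.chi u).Nonempty

/-- `par` is a parent function for `G`: it sends every non-root vertex to its parent. -/
def IsParentFun (par : V → V) : Prop := ∀ v : V, ¬ G.IsRoot v → (par v, v) ∈ G.E

end DirectedGraph

section Shift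

open scoped Classical

variable {V : Type*}

/-- the Hilbert space `ℓ²(V)` -/
noncomputable abbrev l2 (V : Type*) := lp (fun _ : V => ℂ) 2

/-- the standard orthonormal basis vector `e_u` of `ℓ²(V)` -/
noncomputable def evec (u : V) : l2 V := lp.single 2 u 1

/-- `S` is the weighted shift on the directed tree `G` with weights `w`, characterized by
its matrix entries: `⟪S e_u, e_v⟫ = w v` if `v` is a child of `u`, and `0` otherwise
(equivalently, `S e_u = ∑_{v ∈ Chi(u)} w v • e_v`). -/
noncomputable def IsWeightedShift (G : DirectedGraph V) (w : V → ℝ) (S : l2 V →L[ℂ] l2 V) : Prop :=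
  ∀ u v : V, ⟪S (evec u), evec v⟫_ℂ = if (u, v) ∈ G.E then (w v : ℂ) else 0

end Shift

section TreeAux

open DirectedGraph

variable {V : Type*} {G : DirectedGraph V} {root : V}

theorem parent_eq (htree : G.IsDirectedTree) {u u' v : V} (h : (u, v) ∈ G.E)
    (h' : (u', v) ∈ G.E) : u = u' := by
  have hr : ¬ G.IsRoot v := fun hr => hr u h
  obtain ⟨p, _, hu⟩ := htree.2.2 v hr
  rw [hu u h, hu u' h']

theorem chiIter_succ (n : ℕ) (W : Set V) :
    G.chiIter (n + 1) W = G.chiSet (G.chiIter n W) :=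
  Function.iterate_succ_apply' _ _ _

theorem chiIter_zero (W : Set V) : G.chiIter 0 W = W := rfl

theorem reach (htree : G.IsDirectedTree) (hroot : G.IsRoot root) (v : V) :
    ∃ n, v ∈ G.chiIter n {root} := by
  by_cases hv : v = root
  · exact ⟨0, by rw [chiIter_zero, hv]; exact Set.mem_singleton root⟩
  obtain ⟨n, f, hn, h0, hl, hadj⟩ := htree.2.1 root v (fun h => hv h.symm)
  obtain ⟨m, rfl⟩ : ∃ m, n = m + 2 := ⟨n - 2, by omega⟩
  have key : ∀ m (f : ℕ → V), f 0 = root →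
      (∀ i, i + 1 < m + 2 → G.Adj (f i) (f (i + 1))) →
      ∃ k, f (m + 1) ∈ G.chiIter k {root} := by
    intro m
    induction m with
    | zero =>
      intro f h0 hadj
      rcases hadj 0 (by omega) with h | h
      · refine ⟨1, ?_⟩
        rw [chiIter_succ, chiIter_zero]
        exact ⟨f 0, h0, h⟩
      · rw [h0] at h
        exact absurd h (hroot _)
    | succ m ih =>
      intro f h0 hadj
      obtain ⟨k, hk⟩ := ih f h0 (fun i hi => hadj i (by omega))
      rcases hadj (m + 1) (by omega) with h | h
      · refine ⟨k + 1, ?_⟩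
        rw [chiIter_succ]
        exact ⟨f (m + 1), hk, h⟩
      · cases k with
        | zero =>
          rw [chiIter_zero] at hk
          have hfr : f (m + 1) = root := hk
          rw [hfr] at h
          exact absurd h (hroot _)
        | succ k =>
          rw [chiIter_succ] at hk
          obtain ⟨p, hp, hpe⟩ := hk
          have hpq : f (m + 1 + 1) = p := parent_eq htree h hpe
          exact ⟨k, hpq ▸ hp⟩
  obtain ⟨k, hk⟩ := key m f h0 (fun i hi => hadj i hi)
  exact ⟨k, hl ▸ hk⟩

theorem depth_unique (htree : G.IsDirectedTree) (hroot : G.IsRoot root) :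
    ∀ n m (v : V), v ∈ G.chiIter n {root} → v ∈ G.chiIter m {root} → n = m := by
  intro n
  induction n with
  | zero =>
    intro m v h1 h2
    cases m with
    | zero => rfl
    | succ m =>
      have hv : v = root := h1
      rw [chiIter_succ] at h2
      obtain ⟨p, _, hpe⟩ := h2
      rw [hv] at hpe
      exact absurd hpe (hroot p)
  | succ n ih =>
    intro m v h1 h2
    rw [chiIter_succ] at h1
    obtain ⟨p, hp, hpe⟩ := h1
    cases m with
    | zero =>
      have hv : v = root := h2
      rw [hv] at hpe
      exact absurd hpe (hroot p)
    | succ m =>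
      rw [chiIter_succ] at h2
      obtain ⟨q, hq, hqe⟩ := h2
      have hpq : p = q := parent_eq htree hpe hqe
      rw [ih m p hp (hpq ▸ hq)]

theorem chiIter_finite (hchi : ∀ u : V, (G.chi u).Finite) (n : ℕ) {W : Set V}
    (hW : W.Finite) : (G.chiIter n W).Finite := by
  induction n with
  | zero => exact hW
  | succ n ih =>
    rw [chiIter_succ]
    have heq : G.chiSet (G.chiIter n W) = ⋃ u ∈ G.chiIter n W, G.chi u := by
      ext v
      simp only [DirectedGraph.chiSet, DirectedGraph.chi, Set.mem_setOf_eq, Set.mem_iUnion]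
      tauto
    rw [heq]
    exact ih.biUnion (fun u _ => hchi u)

end TreeAux
section ShiftAux

open scoped Classical

variable {V : Type*}

theorem evec_apply_self (u : V) : (evec u : ∀ _ : V, ℂ) u = 1 :=
  lp.single_apply_self 2 u 1

theorem evec_apply_ne {u v : V} (h : v ≠ u) : (evec u : ∀ _ : V, ℂ) v = 0 :=
  lp.single_apply_ne 2 u 1 h

theorem inner_evec_left (u : V) (f : l2 V) : ⟪evec u, f⟫_ℂ = f u := by
  simp only [evec]
  rw [lp.inner_single_left]
  simp [RCLike.inner_apply]

theorem inner_evec_right (f : l2 V) (v : V) :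
    ⟪f, evec v⟫_ℂ = (starRingEnd ℂ) (f v) := by
  simp only [evec]
  rw [lp.inner_single_right]
  simp [RCLike.inner_apply]

theorem shift_apply {G : DirectedGraph V} {w : V → ℝ} {S : l2 V →L[ℂ] l2 V}
    (hS : IsWeightedShift G w S) (u v : V) :
    (S (evec u) : ∀ _ : V, ℂ) v = if (u, v) ∈ G.E then ((w v : ℝ) : ℂ) else 0 := by
  have h1 : (S (evec u) : ∀ _ : V, ℂ) v = ⟪evec v, S (evec u)⟫_ℂ :=
    (inner_evec_left v (S (evec u))).symm
  rw [h1, ← inner_conj_symm, hS u v]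
  split_ifs <;> simp

theorem ker_adjoint_iff (S : l2 V →L[ℂ] l2 V) (x : l2 V) :
    ContinuousLinearMap.adjoint S x = 0 ↔ ∀ u : V, ⟪S (evec u), x⟫_ℂ = 0 := by
  constructor
  · intro h u
    rw [← ContinuousLinearMap.adjoint_inner_right S (evec u) x, h, inner_zero_right]
  · intro h
    apply lp.ext
    funext u
    have h1 : (ContinuousLinearMap.adjoint S x : ∀ _ : V, ℂ) u
        = ⟪evec u, ContinuousLinearMap.adjoint S x⟫_ℂ := (inner_evec_left _ _).symm
    rw [h1, ContinuousLinearMap.adjoint_inner_right, h u]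
    simp [lp.coeFn_zero]

theorem rpow_two_eq (x : ℝ) : x ^ ((2 : ℝ≥0∞).toReal) = x ^ (2 : ℕ) := by
  rw [ENNReal.toReal_ofNat, show (2 : ℝ) = ((2 : ℕ) : ℝ) by norm_num, Real.rpow_natCast]

theorem memℓp_two {f : V → ℂ} (h : Summable fun v => ‖f v‖ ^ (2 : ℕ)) :
    Memℓp f 2 := by
  apply memℓp_gen
  simpa only [rpow_two_eq] using h

theorem lp_norm_le_two {f : l2 V} {C : ℝ} (hC : 0 ≤ C)
    (h : ∑' v, ‖(f : ∀ _ : V, ℂ) v‖ ^ (2 : ℕ) ≤ C ^ (2 : ℕ)) : ‖f‖ ≤ C := by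
  apply lp.norm_le_of_tsum_le (by rw [ENNReal.toReal_ofNat]; norm_num) hC
  simpa only [rpow_two_eq] using h

end ShiftAux
section ShiftConstruction

open scoped Classical

variable {V : Type*}

theorem exists_shift [Countable V] {G : DirectedGraph V} (htree : G.IsDirectedTree) :
    ∃ (w : V → ℝ) (S : l2 V →L[ℂ] l2 V), (∀ v, 0 < w v) ∧ IsWeightedShift G w S := by
  obtain ⟨ι, hι⟩ := Countable.exists_injective_nat V
  obtain ⟨par, hpar⟩ : ∃ par : V → V, ∀ v, ¬G.IsRoot v → (par v, v) ∈ G.E := by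
    refine ⟨fun v => if h : G.IsRoot v then v else (htree.2.2 v h).choose, fun v h => ?_⟩
    simp only [dif_neg h]
    exact (htree.2.2 v h).choose_spec.1
  have hpar_eq : ∀ u v : V, (u, v) ∈ G.E → par v = u := fun u v h =>
    parent_eq htree (hpar v fun hr => hr u h) h
  set w : V → ℝ := fun v => (1 / 2 : ℝ) ^ ι v with hwdef
  have hwpos : ∀ v, 0 < w v := fun v => by simp only [hwdef]; positivity
  have hsq : ∀ v, w v ^ 2 = (1 / 4 : ℝ) ^ ι v := by
    intro v
    simp only [hwdef]
    rw [show (1 / 4 : ℝ) = (1 / 2) ^ 2 by norm_num, ← pow_mul, ← pow_mul, mul_comm (ι v) 2]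
  have hsummable : Summable fun v => w v ^ 2 := by
    have hgeo : Summable fun n : ℕ => (1 / 4 : ℝ) ^ n :=
      summable_geometric_of_lt_one (by norm_num) (by norm_num)
    exact (hgeo.comp_injective hι).congr fun v => (hsq v).symm
  set c := ∑' v, w v ^ 2 with hcdef
  have hcnn : 0 ≤ c := tsum_nonneg fun v => sq_nonneg _
  set Sf : (V → ℂ) → V → ℂ := fun x v => if G.IsRoot v then 0 else ((w v : ℝ) : ℂ) * x (par v)
    with hSf
  have hSf_le : ∀ (x : l2 V) (v : V), ‖Sf (x : ∀ _ : V, ℂ) v‖ ≤ w v * ‖x‖ := by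
    intro x v
    simp only [hSf]
    split_ifs with h
    · simp only [norm_zero]
      positivity
    · rw [norm_mul]
      have h1 : ‖((w v : ℝ) : ℂ)‖ = w v := by
        rw [Complex.norm_real, Real.norm_eq_abs, abs_of_pos (hwpos v)]
      rw [h1]
      exact mul_le_mul_of_nonneg_left (lp.norm_apply_le_norm (by norm_num) x (par v))
        (hwpos v).le
  have hptbound : ∀ (x : l2 V) (v : V), ‖Sf (x : ∀ _ : V, ℂ) v‖ ^ 2 ≤ w v ^ 2 * ‖x‖ ^ 2 := by
    intro x v
    calc ‖Sf (x : ∀ _ : V, ℂ) v‖ ^ 2 ≤ (w v * ‖x‖) ^ 2 :=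
          pow_le_pow_left₀ (norm_nonneg _) (hSf_le x v) 2
      _ = w v ^ 2 * ‖x‖ ^ 2 := by ring
  have hmem : ∀ x : l2 V, Memℓp (Sf (x : ∀ _ : V, ℂ)) 2 := by
    intro x
    apply memℓp_two
    exact Summable.of_nonneg_of_le (fun v => by positivity) (fun v => hptbound x v)
      (hsummable.mul_right (‖x‖ ^ 2))
  set SL : l2 V →ₗ[ℂ] l2 V :=
    { toFun := fun x => (⟨Sf (x : ∀ _ : V, ℂ), hmem x⟩ : lp (fun _ : V => ℂ) 2)
      map_add' := by
        intro x y
        apply lp.ext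
        funext v
        show Sf (⇑(x + y)) v = Sf ⇑x v + Sf ⇑y v
        rw [lp.coeFn_add]
        simp only [hSf, Pi.add_apply]
        split_ifs <;> ring
      map_smul' := by
        intro a x
        apply lp.ext
        funext v
        show Sf (⇑(a • x)) v = (a • (Sf ⇑x : V → ℂ)) v
        rw [lp.coeFn_smul]
        simp only [hSf, Pi.smul_apply, smul_eq_mul]
        split_ifs <;> ring }
    with hSL
  have hSLnorm : ∀ x : l2 V, ‖SL x‖ ≤ Real.sqrt c * ‖x‖ := by
    intro x
    have hcoe : (SL x : ∀ _ : V, ℂ) = Sf (x : ∀ _ : V, ℂ) := rfl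
    apply lp_norm_le_two (by positivity)
    rw [hcoe]
    calc ∑' v, ‖Sf (x : ∀ _ : V, ℂ) v‖ ^ (2 : ℕ)
        ≤ ∑' v, w v ^ 2 * ‖x‖ ^ 2 :=
          Summable.tsum_le_tsum (fun v => hptbound x v)
            (Summable.of_nonneg_of_le (fun v => by positivity) (fun v => hptbound x v)
              (hsummable.mul_right (‖x‖ ^ 2)))
            (hsummable.mul_right (‖x‖ ^ 2))
      _ = c * ‖x‖ ^ 2 := tsum_mul_right
      _ = (Real.sqrt c * ‖x‖) ^ (2 : ℕ) := by
          rw [mul_pow, Real.sq_sqrt hcnn]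
  refine ⟨w, SL.mkContinuous (Real.sqrt c) hSLnorm, hwpos, ?_⟩
  intro u v
  rw [inner_evec_right]
  have happ : (SL.mkContinuous (Real.sqrt c) hSLnorm (evec u) : ∀ _ : V, ℂ) v
      = Sf (⇑(evec u)) v := rfl
  rw [happ]
  simp only [hSf]
  by_cases hE : (u, v) ∈ G.E
  · have hvnr : ¬ G.IsRoot v := fun hr => hr u hE
    rw [if_pos hE, if_neg hvnr, hpar_eq u v hE, evec_apply_self]
    simp [Complex.conj_ofReal]
  · rw [if_neg hE]
    by_cases hr : G.IsRoot v
    · rw [if_pos hr]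
      simp
    · rw [if_neg hr]
      have hne : par v ≠ u := fun h => hE (h ▸ hpar v hr)
      rw [evec_apply_ne hne]
      simp

end ShiftConstruction
section MainLemmas

open scoped Classical

variable {V : Type*}

theorem fd_of_finite {G : DirectedGraph V} {root : V} (htree : G.IsDirectedTree)
    (hroot : G.IsRoot root) (h1 : (∀ u : V, (G.chi u).Finite) ∧ G.Vprec.Finite)
    (w : V → ℝ) (S : l2 V →L[ℂ] l2 V) (hw : ∀ v, 0 < w v) (hS : IsWeightedShift G w S) :
    FiniteDimensional ℂ
      (LinearMap.ker ((ContinuousLinearMap.adjoint S : l2 V →L[ℂ] l2 V) :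
        l2 V →ₗ[ℂ] l2 V)) := by
  set F : Set V := insert root (⋃ u ∈ G.Vprec, G.chi u) with hF
  have hFfin : F.Finite := (h1.2.biUnion fun u _ => h1.1 u).insert root
  have key : ∀ x : l2 V, ContinuousLinearMap.adjoint S x = 0 →
      ∀ v ∉ F, (x : ∀ _ : V, ℂ) v = 0 := by
    intro x hx v hv
    have hvroot : v ≠ root := fun h => hv (by rw [hF, h]; exact Set.mem_insert _ _)
    obtain ⟨n, hn⟩ := reach htree hroot v
    cases n with
    | zero => exact absurd hn hvroot
    | succ n =>
      rw [chiIter_succ] at hn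
      obtain ⟨u, _, hue⟩ := hn
      have hunb : u ∉ G.Vprec := by
        intro hmem
        exact hv (by rw [hF]; exact Set.mem_insert_of_mem _ (Set.mem_biUnion hmem hue))
      have hchiu : ∀ a, (u, a) ∈ G.E → a = v := by
        intro a ha
        by_contra hav
        exact hunb ⟨a, v, ha, hue, hav⟩
      have hSe : S (evec u) = ((w v : ℝ) : ℂ) • evec v := by
        apply lp.ext
        funext s
        rw [lp.coeFn_smul]
        show (S (evec u) : ∀ _ : V, ℂ) s = (((w v : ℝ) : ℂ) • (evec v : ∀ _ : V, ℂ)) s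
        rw [shift_apply hS u s, Pi.smul_apply, smul_eq_mul]
        by_cases hsv : s = v
        · subst hsv
          rw [if_pos hue, evec_apply_self]
          ring
        · rw [if_neg (fun h => hsv (hchiu s h)), evec_apply_ne hsv]
          ring
      have h0 : ⟪S (evec u), x⟫_ℂ = 0 := (ker_adjoint_iff S x).mp hx u
      rw [hSe, inner_smul_left, inner_evec_left] at h0
      have hwv : (starRingEnd ℂ) ((w v : ℝ) : ℂ) ≠ 0 := by
        rw [Complex.conj_ofReal]
        exact_mod_cast (hw v).ne'
      exact (mul_eq_zero.mp h0).resolve_left hwv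
  haveI : Fintype ↥F := hFfin.fintype
  let φ : (LinearMap.ker ((ContinuousLinearMap.adjoint S : l2 V →L[ℂ] l2 V) :
      l2 V →ₗ[ℂ] l2 V)) →ₗ[ℂ] (↥F → ℂ) :=
    { toFun := fun x => fun v => ((x : l2 V) : ∀ _ : V, ℂ) v.1
      map_add' := fun x y => by
        funext v
        simp [lp.coeFn_add]
      map_smul' := fun a x => by
        funext v
        simp [lp.coeFn_smul] }
  have hφinj : Function.Injective φ := by
    intro x y hxy
    apply Subtype.ext
    apply lp.ext
    funext v
    by_cases hvF : v ∈ F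
    · exact congrFun hxy ⟨v, hvF⟩
    · rw [key x.1 (LinearMap.mem_ker.mp x.2) v hvF, key y.1 (LinearMap.mem_ker.mp y.2) v hvF]
  exact FiniteDimensional.of_injective φ hφinj

theorem finite_of_fd [Countable V] {G : DirectedGraph V} (htree : G.IsDirectedTree)
    (h3 : ∀ (w : V → ℝ) (S : l2 V →L[ℂ] l2 V), (∀ v, 0 < w v) → IsWeightedShift G w S →
      FiniteDimensional ℂ
        (LinearMap.ker ((ContinuousLinearMap.adjoint S : l2 V →L[ℂ] l2 V) :
          l2 V →ₗ[ℂ] l2 V))) :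
    (∀ u : V, (G.chi u).Finite) ∧ G.Vprec.Finite := by
  by_contra hcon
  obtain ⟨pa, a, b, hea, heb, hainj, hab⟩ : ∃ pa a b : ℕ → V,
      (∀ n, (pa n, a n) ∈ G.E) ∧ (∀ n, (pa n, b n) ∈ G.E) ∧
      Function.Injective a ∧ ∀ n m, a n ≠ b m := by
    by_cases hfin : ∀ u : V, (G.chi u).Finite
    · have hV : ¬ G.Vprec.Finite := fun hf => hcon ⟨hfin, hf⟩
      let e := Set.Infinite.natEmbedding _ hV
      choose xx yy hxx hyy hxy using fun n : ℕ => (e n).2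
      refine ⟨fun n => (e n : V), xx, yy, hxx, hyy, ?_, ?_⟩
      · intro n m hnm
        have h2 : ((e m : V), xx n) ∈ G.E := by rw [hnm]; exact hxx m
        exact e.injective (Subtype.ext (parent_eq htree (hxx n) h2))
      · intro n m hnm
        rcases eq_or_ne n m with rfl | hne
        · exact hxy n hnm
        · have h2 : ((e m : V), xx n) ∈ G.E := by rw [hnm]; exact hyy m
          exact hne (e.injective (Subtype.ext (parent_eq htree (hxx n) h2)))
    · push_neg at hfin
      obtain ⟨u0, hu0⟩ := hfin
      let e := Set.Infinite.natEmbedding _ hu0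
      refine ⟨fun _ => u0, fun n => (e (2 * n) : V), fun n => (e (2 * n + 1) : V),
        fun n => (e (2 * n)).2, fun n => (e (2 * n + 1)).2, ?_, ?_⟩
      · intro n m hnm
        have := e.injective (Subtype.ext hnm)
        omega
      · intro n m hnm
        have := e.injective (Subtype.ext hnm)
        omega
  obtain ⟨w, S, hwpos, hS⟩ := exists_shift htree
  haveI hFD := h3 w S hwpos hS
  set y : ℕ → l2 V :=
    fun n => ((w (b n) : ℝ) : ℂ) • evec (a n) - ((w (a n) : ℝ) : ℂ) • evec (b n) with hy
  have hyk : ∀ n, ContinuousLinearMap.adjoint S (y n) = 0 := by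
    intro n
    rw [ker_adjoint_iff]
    intro u
    simp only [hy]
    rw [inner_sub_right, inner_smul_right, inner_smul_right, hS u (a n), hS u (b n)]
    by_cases hu : u = pa n
    · subst hu
      rw [if_pos (hea n), if_pos (heb n)]
      ring
    · rw [if_neg fun h => hu (parent_eq htree h (hea n)),
        if_neg fun h => hu (parent_eq htree h (heb n))]
      ring
  have hli : LinearIndependent ℂ y := by
    rw [linearIndependent_iff']
    intro s g hsum i hi
    have hval : ∀ n, (y n : ∀ _ : V, ℂ) (a i) = if n = i then ((w (b i) : ℝ) : ℂ) else 0 := by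
      intro n
      simp only [hy, lp.coeFn_sub, lp.coeFn_smul, Pi.sub_apply, Pi.smul_apply, smul_eq_mul]
      rw [evec_apply_ne (hab i n)]
      rcases eq_or_ne n i with rfl | hne
      · rw [evec_apply_self, if_pos rfl]
        ring
      · rw [evec_apply_ne (fun h => hne (hainj h).symm), if_neg hne]
        ring
    have hcoord := congrArg (fun z : l2 V => (z : ∀ _ : V, ℂ) (a i)) hsum
    simp only [lp.coeFn_sum, Finset.sum_apply, lp.coeFn_smul, Pi.smul_apply, smul_eq_mul,
      lp.coeFn_zero, Pi.zero_apply] at hcoord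
    simp only [hval, mul_ite, mul_zero] at hcoord
    rw [Finset.sum_ite_eq' s i (fun n => g n * ((w (b i) : ℝ) : ℂ)), if_pos hi] at hcoord
    have hwne : ((w (b i) : ℝ) : ℂ) ≠ 0 := by
      exact_mod_cast (hwpos (b i)).ne'
    exact (mul_eq_zero.mp hcoord).resolve_right hwne
  have hliK : LinearIndependent ℂ fun n : ℕ =>
      (⟨y n, LinearMap.mem_ker.mpr (hyk n)⟩ :
        LinearMap.ker ((ContinuousLinearMap.adjoint S : l2 V →L[ℂ] l2 V) :
          l2 V →ₗ[ℂ] l2 V)) := by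
    apply LinearIndependent.of_comp (LinearMap.ker _).subtype
    exact hli
  have hcard := hliK.lt_aleph0_of_finiteDimensional
  rw [Cardinal.mk_nat] at hcard
  exact absurd hcard (lt_irrefl _)

end MainLemmas
section OneTwo

variable {V : Type*} {G : DirectedGraph V} {root : V}

theorem one_implies_two (htree : G.IsDirectedTree) (hroot : G.IsRoot root)
    (h1 : (∀ u : V, (G.chi u).Finite) ∧ G.Vprec.Finite) :
    (∀ u : V, (G.chi u).Finite) ∧
      ∃ k : ℕ, ∀ u ∈ G.Vprec, ∀ n : ℕ, u ∈ G.chiIter n {root} → n < k := by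
  classical
  refine ⟨h1.1, ?_⟩
  set D : Set ℕ := {n | ∃ u ∈ G.Vprec, u ∈ G.chiIter n {root}} with hD
  have hDfin : D.Finite := by
    haveI : Inhabited V := ⟨root⟩
    have hch : ∀ n ∈ D, ∃ u, u ∈ G.Vprec ∧ u ∈ G.chiIter n {root} := fun n hn => hn
    choose! f hf1 hf2 using hch
    apply Set.Finite.of_finite_image (f := f)
    · apply h1.2.subset
      rintro _ ⟨n, hn, rfl⟩
      exact hf1 n hn
    · intro n hn m hm hfe
      exact depth_unique htree hroot n m (f n) (hf2 n hn) (hfe ▸ hf2 m hm)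
  obtain ⟨k, hk⟩ := hDfin.bddAbove
  refine ⟨k + 1, fun u hu n hn => ?_⟩
  have hnD : n ∈ D := ⟨u, hu, hn⟩
  have := hk hnD
  omega

theorem two_implies_one (htree : G.IsDirectedTree) (hroot : G.IsRoot root)
    (h2 : (∀ u : V, (G.chi u).Finite) ∧
      ∃ k : ℕ, ∀ u ∈ G.Vprec, ∀ n : ℕ, u ∈ G.chiIter n {root} → n < k) :
    (∀ u : V, (G.chi u).Finite) ∧ G.Vprec.Finite := by
  refine ⟨h2.1, ?_⟩
  obtain ⟨k, hk⟩ := h2.2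
  have hsub : G.Vprec ⊆ ⋃ n ∈ Finset.range k, G.chiIter n {root} := by
    intro u hu
    obtain ⟨n, hn⟩ := reach htree hroot u
    exact Set.mem_biUnion (Finset.mem_range.mpr (hk u hu n hn)) hn
  exact (Set.Finite.biUnion (Finset.range k).finite_toSet
    (fun n _ => chiIter_finite h2.1 n (Set.finite_singleton root))).subset hsub

end OneTwo


/-- For a countably infinite leafless rooted directed tree `G`, TFAE:
(i) `G` is locally finite and the set `V_≺` of branching vertices is finite;
(ii) `G` is locally finite and the branching index is finite;
(iii) every bounded weighted shift on `G` with positive weights has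
finite-dimensional cokernel `ker S*`. -/
theorem locallyFinite_branching_tfae {V : Type*} [Countable V] [Infinite V]
    (G : DirectedGraph V)
    (htree : G.IsDirectedTree) (root : V) (hroot : G.IsRoot root)
    (hleafless : G.Leafless) :
    List.TFAE
      [ (∀ u : V, (G.chi u).Finite) ∧ G.Vprec.Finite,
        (∀ u : V, (G.chi u).Finite) ∧
          ∃ k : ℕ, ∀ u ∈ G.Vprec, ∀ n : ℕ, u ∈ G.chiIter n {root} → n < k,
        ∀ (w : V → ℝ) (S : l2 V →L[ℂ] l2 V), (∀ v, 0 < w v) → IsWeightedShift G w S →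
          FiniteDimensional ℂ
            (LinearMap.ker ((ContinuousLinearMap.adjoint S : l2 V →L[ℂ] l2 V) :
              l2 V →ₗ[ℂ] l2 V)) ] := by
  tfae_have 1 → 2 := fun h1 => one_implies_two htree hroot h1
  tfae_have 2 → 1 := fun h2 => two_implies_one htree hroot h2
  tfae_have 1 → 3 := fun h1 w S hw hS => fd_of_finite htree hroot h1 w S hw hS
  tfae_have 3 → 1 := fun h3 => finite_of_fd htree h3
  tfae_finish
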